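/- Let (M,g) be a complete Riemannian manifold with vector field X satisfying Ric_X ≥ ε(n−1) g (ε>0) and Ric ≤ (n−1)g. If q ∈ M satisfies d(p,q) > ((n−1)π + |X(p)|)/((n−1)ε), then q is not a critical point of the distance function to p. -/

import Mathlib

open RealInnerProductSpace


noncomputable def rampF (s : ℝ) : ℝ := Real.sin (min s (Real.pi / 2))
noncomputable def rampF' (s : ℝ) : ℝ := Real.cos (min s (Real.pi / 2))

lemma rampF_cont : Continuous rampF :=
  Real.continuous_sin.comp (continuous_id.min continuous_const)

lemma rampF'_cont : Continuous rampF' :=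
  Real.continuous_cos.comp (continuous_id.min continuous_const)

lemma rampF_of_le {s : ℝ} (h : s ≤ Real.pi / 2) : rampF s = Real.sin s := by
  rw [rampF, min_eq_left h]

lemma rampF'_of_le {s : ℝ} (h : s ≤ Real.pi / 2) : rampF' s = Real.cos s := by
  rw [rampF', min_eq_left h]

lemma rampF_of_ge {s : ℝ} (h : Real.pi / 2 ≤ s) : rampF s = 1 := by
  rw [rampF, min_eq_right h, Real.sin_pi_div_two]

lemma rampF'_of_ge {s : ℝ} (h : Real.pi / 2 ≤ s) : rampF' s = 0 := by
  rw [rampF', min_eq_right h, Real.cos_pi_div_two]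

lemma rampF_sq_le_one (s : ℝ) : rampF s ^ 2 ≤ 1 := Real.sin_sq_le_one _

lemma rampF_hasDerivAt (s : ℝ) : HasDerivAt rampF (rampF' s) s := by
  rcases lt_trichotomy s (Real.pi / 2) with h | h | h
  · rw [rampF'_of_le h.le]
    apply (Real.hasDerivAt_sin s).congr_of_eventuallyEq
    filter_upwards [eventually_lt_nhds h] with x hx
    exact rampF_of_le hx.le
  · subst h
    have h0 : rampF' (Real.pi / 2) = 0 := rampF'_of_ge le_rfl
    rw [h0]
    rw [hasDerivAt_iff_tendsto_slope]
    apply squeeze_zero_norm (a := fun x => |x - Real.pi / 2| / 2)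
    · intro x
      rcases eq_or_ne x (Real.pi / 2) with hx | hx
      · simp [hx, slope]
      · have hb : |rampF x - 1| ≤ (x - Real.pi / 2) ^ 2 / 2 := by
          have h1 : rampF x ≤ 1 := Real.sin_le_one _
          have h2 : 1 - (x - Real.pi / 2) ^ 2 / 2 ≤ rampF x := by
            have hm : (Real.pi / 2 - min x (Real.pi / 2)) ^ 2 ≤ (x - Real.pi / 2) ^ 2 := by
              rcases le_total x (Real.pi / 2) with hc | hc
              · rw [min_eq_left hc]; nlinarith
              · rw [min_eq_right hc, sub_self]; simpa using sq_nonneg (x - Real.pi / 2)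
            have := Real.one_sub_sq_div_two_le_cos (x := Real.pi / 2 - min x (Real.pi / 2))
            rw [Real.cos_pi_div_two_sub] at this
            rw [rampF]
            nlinarith
          rw [abs_le]; constructor <;> nlinarith
        have hne : x - Real.pi / 2 ≠ 0 := sub_ne_zero.mpr hx
        have habs : |x - Real.pi / 2| ≠ 0 := abs_ne_zero.mpr hne
        calc ‖slope rampF (Real.pi / 2) x‖
            = |rampF x - 1| / |x - Real.pi / 2| := by
              rw [slope_def_field, Real.norm_eq_abs, abs_div, rampF_of_ge le_rfl]
          _ ≤ ((x - Real.pi / 2) ^ 2 / 2) / |x - Real.pi / 2| := by gcongr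
          _ = |x - Real.pi / 2| / 2 := by
              rw [← sq_abs, sq, mul_div_assoc]
              exact mul_div_cancel_left₀ _ habs
    · have : Filter.Tendsto (fun x : ℝ => |x - Real.pi / 2| / 2) (nhds (Real.pi / 2)) (nhds 0) := by
        have := ((continuous_abs.comp (continuous_sub_right (Real.pi / 2))).div_const 2).tendsto (Real.pi / 2)
        simpa using this
      exact this.mono_left nhdsWithin_le_nhds
  · rw [rampF'_of_ge h.le]
    apply (hasDerivAt_const s (1 : ℝ)).congr_of_eventuallyEq
    filter_upwards [eventually_gt_nhds h] with x hx
    exact rampF_of_ge hx.le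


set_option maxHeartbeats 1000000 in
/-- Lemma 2.8: under the pinching `Ric_X ≥ ε(n−1) g` (`ε > 0`) and
`Ric ≤ (n−1) g`, if `d(p,q) > ((n−1)π + |X(p)|)/((n−1)ε)` then `q` is not a
critical point of the distance function to `p`.  Here `q` is critical to `p`
iff for every `V ∈ T_q M` there is a unit-speed minimal geodesic `γ` from
`p` to `q` with `g(γ'(d(p,q)), V) ≤ 0`; the Riemannian data along minimal
geodesics is recorded as in the fundamental estimate:
`ric γ t = Ric(γ'(t),γ'(t))`, `xg γ t = g(X(γ(t)), γ'(t))`,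
`startV γ = γ'(0)`, `endV γ = γ'(d(p,q))`, `hricX` is
`Ric_X(γ',γ') ≥ ε(n−1)` via `(1/2)(L_X g)(γ',γ') = (d/dt) g(X∘γ, γ')`,
`hric_le` is `Ric ≤ (n−1)g`, and `hminimal` records minimality via
nonnegativity of the index form. -/
theorem stmt_11 {M : Type*} [MetricSpace M]
    {T : M → Type*} [∀ x, NormedAddCommGroup (T x)] [∀ x, InnerProductSpace ℝ (T x)]
    (n : ℕ) (hn : 2 ≤ n) (ε : ℝ) (hε : 0 < ε)
    (X : ∀ x : M, T x)
    (Geo : M → M → Type*)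
    (geo_ne : ∀ p q : M, Nonempty (Geo p q))
    (startV : ∀ {p q : M}, Geo p q → T p)
    (endV : ∀ {p q : M}, Geo p q → T q)
    (hstart_unit : ∀ {p q : M} (γ : Geo p q), ‖startV γ‖ = 1)
    (hend_unit : ∀ {p q : M} (γ : Geo p q), ‖endV γ‖ = 1)
    (ric xg : ∀ {p q : M}, Geo p q → ℝ → ℝ)
    (hxg0 : ∀ {p q : M} (γ : Geo p q), xg γ 0 = ⟪X p, startV γ⟫)
    (hxgd : ∀ {p q : M} (γ : Geo p q), xg γ (dist p q) = ⟪X q, endV γ⟫)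
    (hric_cont : ∀ {p q : M} (γ : Geo p q), Continuous (ric γ))
    (hxg_deriv : ∀ {p q : M} (γ : Geo p q) (t : ℝ), HasDerivAt (xg γ) (deriv (xg γ) t) t)
    (hxg_deriv_cont : ∀ {p q : M} (γ : Geo p q), Continuous (deriv (xg γ)))
    (hricX : ∀ {p q : M} (γ : Geo p q), ∀ t ∈ Set.Icc (0 : ℝ) (dist p q),
      ε * ((n : ℝ) - 1) ≤ ric γ t + deriv (xg γ) t)
    (hric_le : ∀ {p q : M} (γ : Geo p q), ∀ t ∈ Set.Icc (0 : ℝ) (dist p q),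
      ric γ t ≤ (n : ℝ) - 1)
    (hminimal : ∀ {p q : M} (γ : Geo p q) (φ : ℝ → ℝ), φ 0 = 0 → φ (dist p q) = 0 →
      (∀ t, DifferentiableAt ℝ φ t) → Continuous (deriv φ) →
      0 ≤ ∫ t in (0 : ℝ)..(dist p q),
        (((n : ℝ) - 1) * (deriv φ t) ^ 2 - (φ t) ^ 2 * ric γ t))
    (p q : M)
    (hd : (((n : ℝ) - 1) * Real.pi + ‖X p‖) / (((n : ℝ) - 1) * ε) < dist p q) :
    ¬ (∀ V : T q, ∃ γ : Geo p q, ⟪endV γ, V⟫ ≤ 0) := by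
  intro hcrit
  have hπ := Real.pi_pos
  have hn1 : (1:ℝ) ≤ (n:ℝ) - 1 := by
    have : (2:ℝ) ≤ (n:ℝ) := by exact_mod_cast hn
    linarith
  have hn0 : (0:ℝ) < (n:ℝ) - 1 := by linarith
  set d := dist p q with hdd
  have hd0 : 0 < d := lt_of_le_of_lt (by positivity) hd
  have hdmul : ((n:ℝ)-1) * Real.pi + ‖X p‖ < d * (((n:ℝ)-1) * ε) := by
    rw [div_lt_iff₀ (by positivity)] at hd; exact hd
  have key : ∀ γ : Geo p q, (∫ t in (0:ℝ)..d, ric γ t) ≤ ((n:ℝ)-1) * Real.pi := by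
    intro γ
    have hRicInt : IntervalIntegrable (ric γ) MeasureTheory.volume 0 d :=
      (hric_cont γ).intervalIntegrable _ _
    rcases le_total d Real.pi with hcase | hcase
    · calc (∫ t in (0:ℝ)..d, ric γ t) ≤ ∫ _t in (0:ℝ)..d, ((n:ℝ)-1) :=
          intervalIntegral.integral_mono_on hd0.le hRicInt intervalIntegrable_const
            (fun t ht => hric_le γ t ht)
        _ = d * ((n:ℝ)-1) := by simp only [intervalIntegral.integral_const, smul_eq_mul, sub_zero]
        _ ≤ ((n:ℝ)-1) * Real.pi := by nlinarith
    · -- here π ≤ d : use the sin-ramp plateau test function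
      set φ : ℝ → ℝ := fun t => rampF t * rampF (d - t) with hφdef
      set ψ : ℝ → ℝ := fun t => rampF' t * rampF (d - t) - rampF t * rampF' (d - t) with hψdef
      have hder : ∀ t, HasDerivAt φ (ψ t) t := by
        intro t
        have h1 : HasDerivAt (fun x : ℝ => d - x) (-1) t := (hasDerivAt_id t).const_sub d
        have h2 : HasDerivAt (fun x : ℝ => rampF (d - x)) (rampF' (d - t) * (-1)) t :=
          (rampF_hasDerivAt (d - t)).comp t h1
        have h3 := (rampF_hasDerivAt t).mul h2
        refine h3.congr_deriv ?_
        ring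
      have hderiv_eq : deriv φ = ψ := funext fun t => (hder t).deriv
      have hφc : Continuous φ :=
        rampF_cont.mul (rampF_cont.comp (continuous_const.sub continuous_id))
      have hψc : Continuous ψ :=
        (rampF'_cont.mul (rampF_cont.comp (continuous_const.sub continuous_id))).sub
          (rampF_cont.mul (rampF'_cont.comp (continuous_const.sub continuous_id)))
      have h0ramp : rampF 0 = 0 := by
        rw [rampF_of_le (by positivity), Real.sin_zero]
      have hφ0 : φ 0 = 0 := by simp [hφdef, h0ramp]
      have hφd : φ d = 0 := by simp [hφdef, h0ramp]
      have hmin := hminimal γ φ hφ0 hφd (fun t => (hder t).differentiableAt)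
        (by rw [hderiv_eq]; exact hψc)
      rw [hderiv_eq] at hmin
      have hφsq : ∀ t, φ t ^ 2 ≤ 1 := by
        intro t
        have h1 := rampF_sq_le_one t
        have h2 := rampF_sq_le_one (d - t)
        have h3 := sq_nonneg (rampF t)
        have h4 := sq_nonneg (rampF (d - t))
        have : φ t ^ 2 = rampF t ^ 2 * rampF (d - t) ^ 2 := by rw [hφdef]; ring
        nlinarith
      -- the integral of (1 - φ² + ψ²) over [0, d] equals π
      have hK : (∫ t in (0:ℝ)..d, (1 - φ t ^ 2 + ψ t ^ 2)) = Real.pi := by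
        have hπ2d : Real.pi / 2 ≤ d - Real.pi / 2 := by linarith
        have hc : Continuous (fun t => 1 - φ t ^ 2 + ψ t ^ 2) :=
          (continuous_const.sub (hφc.pow 2)).add (hψc.pow 2)
        rw [← intervalIntegral.integral_add_adjacent_intervals
              (hc.intervalIntegrable 0 (Real.pi/2)) (hc.intervalIntegrable (Real.pi/2) d),
            ← intervalIntegral.integral_add_adjacent_intervals
              (hc.intervalIntegrable (Real.pi/2) (d - Real.pi/2))
              (hc.intervalIntegrable (d - Real.pi/2) d)]
        have e1 : (∫ t in (0:ℝ)..(Real.pi/2), (1 - φ t ^ 2 + ψ t ^ 2)) = Real.pi / 2 := by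
          have hE : Set.EqOn (fun t => 1 - φ t ^ 2 + ψ t ^ 2)
              (fun t => 1 + Real.cos (2*t)) (Set.uIcc (0:ℝ) (Real.pi/2)) := by
            rw [Set.uIcc_of_le (by positivity)]
            intro t ht
            obtain ⟨ht0, ht1⟩ := ht
            have hA : rampF t = Real.sin t := rampF_of_le ht1
            have hA' : rampF' t = Real.cos t := rampF'_of_le ht1
            have hB : rampF (d - t) = 1 := rampF_of_ge (by linarith)
            have hB' : rampF' (d - t) = 0 := rampF'_of_ge (by linarith)
            simp only [hφdef, hψdef, hA, hA', hB, hB']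
            have hpy := Real.sin_sq_add_cos_sq t
            rw [Real.cos_two_mul]
            linear_combination -hpy
          rw [intervalIntegral.integral_congr hE]
          have hF : ∀ t ∈ Set.uIcc (0:ℝ) (Real.pi/2),
              HasDerivAt (fun u => u + Real.sin (2*u)/2) (1 + Real.cos (2*t)) t := by
            intro t _
            have h1 : HasDerivAt (fun u : ℝ => 2*u) 2 t := by
              simpa using (hasDerivAt_id t).const_mul (2:ℝ)
            have h2 := ((Real.hasDerivAt_sin (2*t)).comp t h1).div_const 2
            have h3 := (hasDerivAt_id t).add h2
            refine h3.congr_deriv ?_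
            ring
          rw [intervalIntegral.integral_eq_sub_of_hasDerivAt hF
            (((continuous_const.add ((Real.continuous_cos.comp
              (continuous_const.mul continuous_id)))).intervalIntegrable _ _))]
          have : 2 * (Real.pi/2) = Real.pi := by ring
          rw [this, Real.sin_pi]
          norm_num
        have e2 : (∫ t in (Real.pi/2)..(d - Real.pi/2), (1 - φ t ^ 2 + ψ t ^ 2)) = 0 := by
          have hE : Set.EqOn (fun t => 1 - φ t ^ 2 + ψ t ^ 2) (fun _t => (0:ℝ))
              (Set.uIcc (Real.pi/2) (d - Real.pi/2)) := by
            rw [Set.uIcc_of_le hπ2d]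
            intro t ht
            obtain ⟨ht0, ht1⟩ := ht
            have hA : rampF t = 1 := rampF_of_ge ht0
            have hA' : rampF' t = 0 := rampF'_of_ge ht0
            have hB : rampF (d - t) = 1 := rampF_of_ge (by linarith)
            have hB' : rampF' (d - t) = 0 := rampF'_of_ge (by linarith)
            simp [hφdef, hψdef, hA, hA', hB, hB']
          rw [intervalIntegral.integral_congr hE]
          simp
        have e3 : (∫ t in (d - Real.pi/2)..d, (1 - φ t ^ 2 + ψ t ^ 2)) = Real.pi / 2 := by
          have hE : Set.EqOn (fun t => 1 - φ t ^ 2 + ψ t ^ 2)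
              (fun t => 1 + Real.cos (2*(d - t))) (Set.uIcc (d - Real.pi/2) d) := by
            rw [Set.uIcc_of_le (by linarith)]
            intro t ht
            obtain ⟨ht0, ht1⟩ := ht
            have hA : rampF t = 1 := rampF_of_ge (by linarith)
            have hA' : rampF' t = 0 := rampF'_of_ge (by linarith)
            have hB : rampF (d - t) = Real.sin (d - t) := rampF_of_le (by linarith)
            have hB' : rampF' (d - t) = Real.cos (d - t) := rampF'_of_le (by linarith)
            simp only [hφdef, hψdef, hA, hA', hB, hB']
            have hpy := Real.sin_sq_add_cos_sq (d - t)
            rw [Real.cos_two_mul]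
            linear_combination -hpy
          rw [intervalIntegral.integral_congr hE]
          have hF : ∀ t ∈ Set.uIcc (d - Real.pi/2) d,
              HasDerivAt (fun u => u - Real.sin (2*(d - u))/2) (1 + Real.cos (2*(d - t))) t := by
            intro t _
            have h1 : HasDerivAt (fun u : ℝ => 2*(d - u)) (2 * (-1)) t :=
              ((hasDerivAt_id t).const_sub d).const_mul 2
            have h2 := ((Real.hasDerivAt_sin (2*(d - t))).comp t h1).div_const 2
            have h3 := (hasDerivAt_id t).sub h2
            refine h3.congr_deriv ?_
            ring
          rw [intervalIntegral.integral_eq_sub_of_hasDerivAt hF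
            (((continuous_const.add ((Real.continuous_cos.comp
              (continuous_const.mul (continuous_const.sub continuous_id))))).intervalIntegrable _ _))]
          have h4 : 2 * (d - (d - Real.pi/2)) = Real.pi := by ring
          have h5 : 2 * (d - d) = 0 := by ring
          rw [h4, h5, Real.sin_pi, Real.sin_zero]
          ring
        rw [e1, e2, e3]
        ring
      -- combine everything
      have hIφric : IntervalIntegrable (fun t => (1 - φ t ^ 2) * ric γ t)
          MeasureTheory.volume 0 d :=
        ((continuous_const.sub (hφc.pow 2)).mul (hric_cont γ)).intervalIntegrable _ _
      have hIφn : IntervalIntegrable (fun t => (1 - φ t ^ 2) * ((n:ℝ)-1))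
          MeasureTheory.volume 0 d :=
        ((continuous_const.sub (hφc.pow 2)).mul continuous_const).intervalIntegrable _ _
      have hIψ : IntervalIntegrable (fun t => ((n:ℝ)-1) * ψ t ^ 2)
          MeasureTheory.volume 0 d :=
        (continuous_const.mul (hψc.pow 2)).intervalIntegrable _ _
      have hImin : IntervalIntegrable (fun t => ((n:ℝ)-1) * ψ t ^ 2 - φ t ^ 2 * ric γ t)
          MeasureTheory.volume 0 d :=
        ((continuous_const.mul (hψc.pow 2)).sub ((hφc.pow 2).mul (hric_cont γ))).intervalIntegrable _ _
      have hmono : (∫ t in (0:ℝ)..d, (1 - φ t ^ 2) * ric γ t)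
          ≤ ∫ t in (0:ℝ)..d, (1 - φ t ^ 2) * ((n:ℝ)-1) :=
        intervalIntegral.integral_mono_on hd0.le hIφric hIφn
          (fun t ht => mul_le_mul_of_nonneg_left (hric_le γ t ht) (by nlinarith [hφsq t]))
      have step2 : (∫ t in (0:ℝ)..d, ric γ t)
            + (∫ t in (0:ℝ)..d, (((n:ℝ)-1) * ψ t ^ 2 - φ t ^ 2 * ric γ t))
          = ∫ t in (0:ℝ)..d, ((1 - φ t ^ 2) * ric γ t + ((n:ℝ)-1) * ψ t ^ 2) := by
        rw [← intervalIntegral.integral_add hRicInt hImin]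
        apply intervalIntegral.integral_congr
        intro t _
        ring
      have step3 : (∫ t in (0:ℝ)..d, ((1 - φ t ^ 2) * ric γ t + ((n:ℝ)-1) * ψ t ^ 2))
          ≤ ∫ t in (0:ℝ)..d, ((1 - φ t ^ 2) * ((n:ℝ)-1) + ((n:ℝ)-1) * ψ t ^ 2) := by
        rw [intervalIntegral.integral_add hIφric hIψ, intervalIntegral.integral_add hIφn hIψ]
        exact add_le_add_left hmono _
      have step4 : (∫ t in (0:ℝ)..d, ((1 - φ t ^ 2) * ((n:ℝ)-1) + ((n:ℝ)-1) * ψ t ^ 2))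
          = ((n:ℝ)-1) * Real.pi := by
        rw [← hK, ← intervalIntegral.integral_const_mul]
        apply intervalIntegral.integral_congr
        intro t _
        ring
      linarith [hmin, step2, step3, step4]
  -- use the criticality hypothesis with V = X q
  obtain ⟨γ, hγ⟩ := hcrit (X q)
  have hRicInt : IntervalIntegrable (ric γ) MeasureTheory.volume 0 d :=
    (hric_cont γ).intervalIntegrable _ _
  have hFTC : (∫ t in (0:ℝ)..d, deriv (xg γ) t) = xg γ d - xg γ 0 :=
    intervalIntegral.integral_eq_sub_of_hasDerivAt (fun t _ => hxg_deriv γ t)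
      ((hxg_deriv_cont γ).intervalIntegrable _ _)
  have hmono2 : (∫ t in (0:ℝ)..d, (ε * ((n:ℝ)-1) - ric γ t))
      ≤ ∫ t in (0:ℝ)..d, deriv (xg γ) t :=
    intervalIntegral.integral_mono_on hd0.le
      ((continuous_const.sub (hric_cont γ)).intervalIntegrable _ _)
      ((hxg_deriv_cont γ).intervalIntegrable _ _)
      (fun t ht => by have := hricX γ t ht; linarith)
  have hsub : (∫ t in (0:ℝ)..d, (ε * ((n:ℝ)-1) - ric γ t))
      = ε * ((n:ℝ)-1) * d - ∫ t in (0:ℝ)..d, ric γ t := by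
    rw [intervalIntegral.integral_sub intervalIntegrable_const hRicInt,
      intervalIntegral.integral_const]
    simp
    ring
  have hx0 : -‖X p‖ ≤ xg γ 0 := by
    rw [hxg0]
    have h1 : |⟪X p, startV γ⟫| ≤ ‖X p‖ * ‖startV γ‖ := abs_real_inner_le_norm _ _
    rw [hstart_unit γ, mul_one] at h1
    have h2 := neg_abs_le (⟪X p, startV γ⟫)
    linarith
  have hring : ε * ((n:ℝ)-1) * d = d * (((n:ℝ)-1) * ε) := by ring
  have hend : (0:ℝ) < ⟪X q, endV γ⟫ := by
    rw [← hxgd γ]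
    linarith [key γ, hFTC, hmono2, hsub, hx0, hdmul]
  rw [real_inner_comm] at hend
  linarith
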